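/- arXiv:2007.08585 — 2 statements merged into one kernel-verified Lean document; each statement's English description precedes it below -/
import Mathlib

section
/- Let q be a vertex of G and v a vertex of H that is reachable from q in G, and assume: (i) every directed walk from q to v in G contains a vertex of S; (ii) for every directed walk W from q to v in G, the suffix of W beginning at the last occurrence on W of a vertex of S is a walk in H. Take ω(s) = dist_G(q,s) for s ∈ S, and assume additionally that there is a unique directed walk P from q to v in G of total length dist_G(q,v). Then for every s ∈ S: v ∈ Vor(s) if and only if s is the last vertex of S occurring on P; moreover, in that case d^ω(s,v) = dist_G(q,v). -/
open scoped ENNReal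

/-- A finite directed graph on vertex type `V`, with an adjacency relation and
real-valued edge lengths. -/
structure DiGraph (V : Type) where
  Adj : V → V → Prop
  len : V → V → ℝ

namespace DiGraph

variable {V : Type}

/-- `G.IsWalk a b l` : `l` is (the vertex list of) a directed walk from `a` to `b` in `G`. -/
inductive IsWalk (G : DiGraph V) : V → V → List V → Prop
  | single (a : V) : IsWalk G a a [a]
  | cons {a b c : V} {l : List V} (h : G.Adj a b) (hw : IsWalk G b c l) :
      IsWalk G a c (a :: l)

/-- Total length of a walk given by its vertex list. -/
noncomputable def walkLen (G : DiGraph V) : List V → ℝ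
  | a :: b :: l => G.len a b + G.walkLen (b :: l)
  | _ => 0

/-- `dist G a b` : the infimum, in `ℝ≥0∞`, of the lengths of directed walks
from `a` to `b` (`∞` if there is no such walk). -/
noncomputable def dist (G : DiGraph V) (a b : V) : ℝ≥0∞ :=
  sInf {x : ℝ≥0∞ | ∃ l, G.IsWalk a b l ∧ x = ENNReal.ofReal (G.walkLen l)}

/-- The additively weighted distance `d^ω(s,v) = ω(s) + dist_H(s,v)`, valued in `EReal`
so that arbitrary (possibly infinite) additive weights can be accommodated. -/
noncomputable def dOm (H : DiGraph V) (ω : V → EReal) (s v : V) : EReal :=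
  ω s + ((H.dist s v : ℝ≥0∞) : EReal)

/-- The Voronoi cell of a site `s ∈ S`: the set of vertices `v` of `H` such that for all
`s' ∈ S` with `s' ≠ s`, the pair `(d^ω(s,v), −ω(s))` is lexicographically strictly smaller
than `(d^ω(s',v), −ω(s'))`. -/
def Vor (H : DiGraph V) (HV : Set V) (S : Finset V) (ω : V → EReal) (s : V) : Set V :=
  {v ∈ HV | ∀ s' ∈ S, s' ≠ s →
    dOm H ω s v < dOm H ω s' v ∨ (dOm H ω s v = dOm H ω s' v ∧ ω s' < ω s)}

variable {G H : DiGraph V} {a b c x : V} {l : List V}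

lemma isWalk_cons_form (h : G.IsWalk a b l) : ∃ t, l = a :: t := by
  cases h <;> exact ⟨_, rfl⟩

lemma isWalk_concat_form (h : G.IsWalk a b l) : ∃ t, l = t ++ [b] := by
  induction h with
  | single a => exact ⟨[], rfl⟩
  | cons h hw ih => obtain ⟨t, rfl⟩ := ih; exact ⟨_ :: t, rfl⟩

lemma walkLen_nil : G.walkLen [] = 0 := rfl
lemma walkLen_single : G.walkLen [a] = 0 := rfl
lemma walkLen_cons_cons : G.walkLen (a :: b :: l) = G.len a b + G.walkLen (b :: l) := rfl

lemma walkLen_nonneg (hpos : ∀ a b, G.Adj a b → 0 < G.len a b) (h : G.IsWalk a b l) :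
    0 ≤ G.walkLen l := by
  induction h with
  | single a => simp [walkLen]
  | cons h hw ih =>
    obtain ⟨t, rfl⟩ := isWalk_cons_form hw
    have := hpos _ _ h
    rw [walkLen_cons_cons]
    linarith

lemma walkLen_pos (hpos : ∀ a b, G.Adj a b → 0 < G.len a b) (h : G.IsWalk a b l)
    (hne : a ≠ b) : 0 < G.walkLen l := by
  cases h with
  | single a => exact absurd rfl hne
  | cons hadj hw =>
    obtain ⟨t, rfl⟩ := isWalk_cons_form hw
    have h1 := hpos _ _ hadj
    have h2 := walkLen_nonneg hpos hw
    rw [walkLen_cons_cons]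
    linarith

lemma walkLen_append (G : DiGraph V) (x : V) (l₂ : List V) :
    ∀ l₁, G.walkLen (l₁ ++ x :: l₂) = G.walkLen (l₁ ++ [x]) + G.walkLen (x :: l₂)
  | [] => by simp [walkLen]
  | [a] => by simp [walkLen]
  | a :: b :: l₁ => by
    have := walkLen_append G x l₂ (b :: l₁)
    simp only [List.cons_append, walkLen_cons_cons] at *
    linarith

lemma isWalk_cons_inv {a b a' : V} {l : List V} (h : G.IsWalk a b (a' :: l))
    (hne : l ≠ []) : a' = a ∧ ∃ d t, l = d :: t ∧ G.Adj a d ∧ G.IsWalk d b l := by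
  cases h with
  | single a => exact absurd rfl hne
  | cons hadj hw =>
    obtain ⟨t, ht⟩ := isWalk_cons_form hw
    exact ⟨rfl, _, t, ht, hadj, hw⟩

lemma isWalk_split : ∀ {a l₁}, G.IsWalk a b (l₁ ++ x :: l₂) →
    G.IsWalk a x (l₁ ++ [x]) ∧ G.IsWalk x b (x :: l₂) := by
  intro a l₁
  induction l₁ generalizing a with
  | nil =>
    intro h
    obtain ⟨t, ht⟩ := isWalk_cons_form h
    simp only [List.nil_append] at h ht ⊢
    have hxa : x = a := by injection ht with h1 h2
    subst hxa
    exact ⟨.single x, h⟩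
  | cons c l₁ ih =>
    intro h
    simp only [List.cons_append] at h ⊢
    obtain ⟨rfl, d, t, he, hadj, hw⟩ := isWalk_cons_inv h (by simp)
    obtain ⟨h1, h2⟩ := ih hw
    exact ⟨.cons hadj h1, h2⟩

lemma isWalk_append : ∀ {a l₁}, G.IsWalk a x (l₁ ++ [x]) → G.IsWalk x b (x :: l₂) →
    G.IsWalk a b (l₁ ++ x :: l₂) := by
  intro a l₁
  induction l₁ generalizing a with
  | nil =>
    intro h1 h2
    simp only [List.nil_append] at *
    obtain ⟨t, ht⟩ := isWalk_cons_form h1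
    have hxa : x = a := by injection ht with h1' h2'
    subst hxa
    cases h1 with
    | single => exact h2
    | cons hadj hw => obtain ⟨t, ht⟩ := isWalk_cons_form hw; simp at ht
  | cons c l₁ ih =>
    intro h1 h2
    simp only [List.cons_append] at h1 ⊢
    obtain ⟨rfl, d, t, he, hadj, hw⟩ := isWalk_cons_inv h1 (by simp)
    exact .cons hadj (ih hw h2)

lemma dist_le (h : G.IsWalk a b l) : G.dist a b ≤ ENNReal.ofReal (G.walkLen l) :=
  sInf_le ⟨l, h, rfl⟩

lemma exists_walk_of_dist_ne_top (h : G.dist a b ≠ ⊤) : ∃ l, G.IsWalk a b l := by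
  by_contra hc
  apply h
  rw [dist]
  have : {x : ℝ≥0∞ | ∃ l, G.IsWalk a b l ∧ x = ENNReal.ofReal (G.walkLen l)} = ∅ := by
    ext y
    simp only [Set.mem_setOf_eq, Set.mem_empty_iff_false, iff_false, not_exists]
    exact fun l hl => absurd ⟨l, hl.1⟩ hc
  rw [this, sInf_empty]

lemma exists_nodup_walk (hpos : ∀ a b, G.Adj a b → 0 < G.len a b) (h : G.IsWalk a b l) :
    ∃ l', G.IsWalk a b l' ∧ l'.Nodup ∧ G.walkLen l' ≤ G.walkLen l := by
  induction h with
  | single a => exact ⟨[a], .single a, by simp, le_rfl⟩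
  | @cons a b c l hadj hw ih =>
    obtain ⟨l', hw', hnd, hle⟩ := ih
    obtain ⟨t, rfl⟩ := isWalk_cons_form hw
    by_cases hmem : a ∈ l'
    · obtain ⟨m₁, m₂, rfl⟩ := List.append_of_mem hmem
      obtain ⟨hpre, hsuf⟩ := isWalk_split hw'
      refine ⟨a :: m₂, hsuf, ?_, ?_⟩
      · exact hnd.sublist ((List.suffix_append m₁ (a :: m₂)).sublist)
      · have e := walkLen_append G a m₂ m₁
        have h1 := walkLen_nonneg hpos hpre
        have h2 := hpos _ _ hadj
        rw [walkLen_cons_cons]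
        linarith
    · obtain ⟨t', rfl⟩ := isWalk_cons_form hw'
      refine ⟨a :: b :: t', .cons hadj hw', ?_, ?_⟩
      · exact List.nodup_cons.2 ⟨hmem, hnd⟩
      · rw [walkLen_cons_cons, walkLen_cons_cons]
        linarith

lemma exists_shortest_walk [Fintype V] (hpos : ∀ a b, G.Adj a b → 0 < G.len a b)
    (h : ∃ l, G.IsWalk a b l) :
    ∃ l, G.IsWalk a b l ∧ ENNReal.ofReal (G.walkLen l) = G.dist a b := by
  classical
  set B := {x : ℝ≥0∞ | ∃ l, G.IsWalk a b l ∧ l.Nodup ∧ x = ENNReal.ofReal (G.walkLen l)}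
    with hB
  have hBfin : B.Finite := by
    have hsub : B ⊆ (fun l => ENNReal.ofReal (G.walkLen l)) ''
        {l : List V | l.length ≤ Fintype.card V} := by
      rintro y ⟨l, hwl, hnd, rfl⟩
      exact ⟨l, hnd.length_le_card, rfl⟩
    exact ((List.finite_length_le V (Fintype.card V)).image _).subset hsub
  have hBne : B.Nonempty := by
    obtain ⟨l, hwl⟩ := h
    obtain ⟨l', h1, h2, _⟩ := exists_nodup_walk hpos hwl
    exact ⟨ENNReal.ofReal (G.walkLen l'), ⟨l', h1, h2, rfl⟩⟩
  have hEq : sInf B = G.dist a b := by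
    apply le_antisymm
    · apply le_sInf
      rintro y ⟨l, hwl, rfl⟩
      obtain ⟨l', h1, h2, h3⟩ := exists_nodup_walk hpos hwl
      have hmem : ENNReal.ofReal (G.walkLen l') ∈ B := ⟨l', h1, h2, rfl⟩
      exact (sInf_le hmem).trans (ENNReal.ofReal_le_ofReal h3)
    · apply sInf_le_sInf
      rintro y ⟨l, hwl, _, rfl⟩
      exact ⟨l, hwl, rfl⟩
  obtain ⟨l, hwl, _, hl⟩ := hBne.csInf_mem hBfin
  exact ⟨l, hwl, by rw [← hl, hEq]⟩

lemma dist_triangle [Fintype V] (hpos : ∀ a b, G.Adj a b → 0 < G.len a b) (a x b : V) :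
    G.dist a b ≤ G.dist a x + G.dist x b := by
  by_cases h1 : ∃ l, G.IsWalk a x l
  · by_cases h2 : ∃ l, G.IsWalk x b l
    · obtain ⟨l₁, hw₁, hl₁⟩ := exists_shortest_walk hpos h1
      obtain ⟨l₂, hw₂, hl₂⟩ := exists_shortest_walk hpos h2
      obtain ⟨u, rfl⟩ := isWalk_concat_form hw₁
      obtain ⟨t, rfl⟩ := isWalk_cons_form hw₂
      have hw := isWalk_append hw₁ hw₂
      calc G.dist a b ≤ ENNReal.ofReal (G.walkLen (u ++ x :: t)) := dist_le hw
        _ = G.dist a x + G.dist x b := by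
          rw [walkLen_append G x t u,
            ENNReal.ofReal_add (walkLen_nonneg hpos hw₁) (walkLen_nonneg hpos hw₂), hl₁, hl₂]
    · have : G.dist x b = ⊤ := by
        by_contra hc
        exact h2 (exists_walk_of_dist_ne_top hc)
      simp [this]
  · have : G.dist a x = ⊤ := by
      by_contra hc
      exact h1 (exists_walk_of_dist_ne_top hc)
    simp [this]

lemma isWalk_mono (hsub : ∀ a b, H.Adj a b → G.Adj a b) (h : H.IsWalk a b l) :
    G.IsWalk a b l := by
  induction h with
  | single a => exact .single a
  | cons h hw ih => exact .cons (hsub _ _ h) ih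

lemma walkLen_congr (hlen : H.len = G.len) : ∀ l, H.walkLen l = G.walkLen l
  | [] => rfl
  | [a] => rfl
  | a :: b :: l => by
    rw [walkLen_cons_cons, walkLen_cons_cons, hlen, walkLen_congr hlen (b :: l)]

lemma dist_le_dist (hsub : ∀ a b, H.Adj a b → G.Adj a b) (hlen : H.len = G.len) (a b : V) :
    G.dist a b ≤ H.dist a b := by
  apply le_sInf
  rintro y ⟨l, hwl, rfl⟩
  rw [walkLen_congr hlen]
  exact dist_le (isWalk_mono hsub hwl)

end DiGraph

section ListLemmas

variable {V : Type}

lemma exists_last_mem (S : Finset V) :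
    ∀ l : List V, (∃ s ∈ S, s ∈ l) →
      ∃ l₁ s l₂, l = l₁ ++ s :: l₂ ∧ s ∈ S ∧ ∀ x ∈ l₂, x ∉ (S : Set V)
  | [], h => by simp at h
  | a :: l, h => by
    classical
    by_cases h' : ∃ s ∈ S, s ∈ l
    · obtain ⟨l₁, s, l₂, hdec, hs, hno⟩ := exists_last_mem S l h'
      exact ⟨a :: l₁, s, l₂, by rw [hdec]; rfl, hs, hno⟩
    · have ha : a ∈ S := by
        obtain ⟨s, hsS, hsl⟩ := h
        rcases List.mem_cons.1 hsl with rfl | hm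
        · exact hsS
        · exact absurd ⟨s, hsS, hm⟩ h'
      exact ⟨[], a, l, rfl, ha, fun x hx hxS => h' ⟨x, Finset.mem_coe.1 hxS, hx⟩⟩

lemma suffix_of_suffix_length_le {L t₁ t₂ : List V} (h₁ : t₁ <:+ L) (h₂ : t₂ <:+ L)
    (h : t₁.length ≤ t₂.length) : t₁ <:+ t₂ := by
  obtain ⟨u₁, rfl⟩ := h₁
  obtain ⟨u₂, e⟩ := h₂
  have e1 : t₁ = (u₁ ++ t₁).drop u₁.length := by simp
  have e2 : t₂ = (u₁ ++ t₁).drop u₂.length := by rw [← e]; simp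
  have hlen : u₂.length ≤ u₁.length := by
    have := congrArg List.length e
    simp only [List.length_append] at this
    omega
  have e3 : (u₁ ++ t₁).drop u₁.length =
      ((u₁ ++ t₁).drop u₂.length).drop (u₁.length - u₂.length) := by
    rw [List.drop_drop]
    congr 1
    omega
  rw [e1, e2, e3]
  exact List.drop_suffix _ _

end ListLemmas

section LastUnique

variable {V : Type}

lemma last_unique_aux {S : Finset V} {L l₂ m₂ : List V} {s t : V}
    (hsuf1 : s :: l₂ <:+ L) (hsuf2 : t :: m₂ <:+ L) (hs : s ∈ S)
    (h₂' : ∀ x ∈ m₂, x ∉ (S : Set V))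
    (hlt : (s :: l₂).length < (t :: m₂).length) : False := by
  have h' : s :: l₂ <:+ t :: m₂ := suffix_of_suffix_length_le hsuf1 hsuf2 (le_of_lt hlt)
  obtain ⟨w, hw⟩ := h'
  cases w with
  | nil =>
    have hlen2 := congrArg List.length hw
    simp only [List.nil_append, List.length_cons] at hlen2 hlt
    omega
  | cons c w =>
    have hmem : s ∈ m₂ := by
      have hsufm : s :: l₂ <:+ m₂ := by
        simp only [List.cons_append] at hw
        injection hw with _ hw2
        exact ⟨w, hw2⟩
      exact hsufm.sublist.subset List.mem_cons_self
    exact h₂' s hmem (Finset.mem_coe.mpr hs)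

lemma last_unique {S : Finset V} {l₁ l₂ m₁ m₂ : List V} {s t : V}
    (h : l₁ ++ s :: l₂ = m₁ ++ t :: m₂) (hs : s ∈ S) (ht : t ∈ S)
    (h₂ : ∀ x ∈ l₂, x ∉ (S : Set V)) (h₂' : ∀ x ∈ m₂, x ∉ (S : Set V)) :
    s = t ∧ l₁ = m₁ ∧ l₂ = m₂ := by
  have hsuf1 : s :: l₂ <:+ m₁ ++ t :: m₂ := h ▸ ⟨l₁, rfl⟩
  have hsuf2 : t :: m₂ <:+ m₁ ++ t :: m₂ := ⟨m₁, rfl⟩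
  rcases lt_trichotomy (s :: l₂).length (t :: m₂).length with hlt | heq | hgt
  · exact absurd (last_unique_aux hsuf1 hsuf2 hs h₂' hlt) not_false
  · have hl : l₁.length = m₁.length := by
      have := congrArg List.length h
      simp only [List.length_append, List.length_cons] at this heq ⊢
      omega
    obtain ⟨e1, e2⟩ := List.append_inj h hl
    injection e2 with e3 e4
    exact ⟨e3, e1, e4⟩
  · exact absurd (last_unique_aux hsuf2 hsuf1 ht h₂ hgt) not_false

end LastUnique


/-- With `G, H, HV, S` as usual, `q` a vertex of `G`, `v ∈ HV` reachable
from `q` in `G`, assuming (i) every `q`-`v` walk in `G` meets `S`, (ii) the suffix of any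
`q`-`v` walk beginning at the last occurrence of an `S`-vertex is a walk in `H`, and taking
`ω(s) = dist_G(q,s)`, if `P` is the unique shortest walk from `q` to `v` in `G`, then for
every `s ∈ S`: `v ∈ Vor(s)` iff `s` is the last vertex of `S` occurring on `P`; moreover,
in that case `d^ω(s,v) = dist_G(q,v)`. -/
theorem stmt1 {V : Type} [Fintype V] (G H : DiGraph V) (HV : Set V) (S : Finset V)
    (hpos : ∀ a b, G.Adj a b → 0 < G.len a b)
    (hsub : ∀ a b, H.Adj a b → G.Adj a b) (hlen : H.len = G.len)
    (hHVedge : ∀ a b, H.Adj a b → a ∈ HV ∧ b ∈ HV)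
    (hS : S.Nonempty) (hSH : ↑S ⊆ HV)
    (q v : V) (hv : v ∈ HV) (hreach : ∃ l, G.IsWalk q v l)
    (hi : ∀ l, G.IsWalk q v l → ∃ s ∈ S, s ∈ l)
    (hii : ∀ l, G.IsWalk q v l → ∀ l₁ s l₂, l = l₁ ++ s :: l₂ → s ∈ S →
      (∀ x ∈ l₂, x ∉ (S : Set V)) → H.IsWalk s v (s :: l₂))
    (ω : V → EReal) (hω : ∀ x, ω x = ((G.dist q x : ℝ≥0∞) : EReal))
    (P : List V) (hP : G.IsWalk q v P)
    (hPlen : ENNReal.ofReal (G.walkLen P) = G.dist q v)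
    (hPuniq : ∀ l, G.IsWalk q v l → ENNReal.ofReal (G.walkLen l) = G.dist q v → l = P) :
    ∀ s ∈ S,
      (v ∈ DiGraph.Vor H HV S ω s ↔
        ∃ l₁ l₂, P = l₁ ++ s :: l₂ ∧ ∀ x ∈ l₂, x ∉ (S : Set V)) ∧
      (v ∈ DiGraph.Vor H HV S ω s →
        DiGraph.dOm H ω s v = ((G.dist q v : ℝ≥0∞) : EReal)) := by
  classical
  have hposH : ∀ a b, H.Adj a b → 0 < H.len a b := by
    intro a b h
    rw [hlen]
    exact hpos a b (hsub a b h)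
  have hDtop : G.dist q v ≠ ⊤ := by
    rw [← hPlen]
    exact ENNReal.ofReal_ne_top
  obtain ⟨p₁, s₀, p₂, hPdec, hs₀S, hp₂⟩ := exists_last_mem S P (hi P hP)
  have hW2 : H.IsWalk s₀ v (s₀ :: p₂) := hii P hP p₁ s₀ p₂ hPdec hs₀S hp₂
  have hPw : G.IsWalk q v (p₁ ++ s₀ :: p₂) := hPdec ▸ hP
  obtain ⟨hpre, hsuf⟩ := DiGraph.isWalk_split hPw
  have hlenP : G.walkLen P = G.walkLen (p₁ ++ [s₀]) + G.walkLen (s₀ :: p₂) := by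
    rw [hPdec]
    exact DiGraph.walkLen_append G s₀ p₂ p₁
  have hkeyA : ∀ s, G.dist q v ≤ G.dist q s + H.dist s v := fun s =>
    (DiGraph.dist_triangle hpos q s v).trans
      (add_le_add_right (DiGraph.dist_le_dist hsub hlen s v) _)
  have hkeyB : G.dist q s₀ + H.dist s₀ v ≤ G.dist q v := by
    have h1 : G.dist q s₀ ≤ ENNReal.ofReal (G.walkLen (p₁ ++ [s₀])) := DiGraph.dist_le hpre
    have h2 : H.dist s₀ v ≤ ENNReal.ofReal (G.walkLen (s₀ :: p₂)) := by
      have h3 := DiGraph.dist_le hW2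
      rwa [DiGraph.walkLen_congr hlen] at h3
    calc G.dist q s₀ + H.dist s₀ v
        ≤ ENNReal.ofReal (G.walkLen (p₁ ++ [s₀])) + ENNReal.ofReal (G.walkLen (s₀ :: p₂)) :=
          add_le_add h1 h2
      _ = ENNReal.ofReal (G.walkLen P) := by
          rw [← ENNReal.ofReal_add (DiGraph.walkLen_nonneg hpos hpre)
            (DiGraph.walkLen_nonneg hpos hsuf), ← hlenP]
      _ = G.dist q v := hPlen
  have hEq₀ : G.dist q s₀ + H.dist s₀ v = G.dist q v := le_antisymm hkeyB (hkeyA s₀)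
  have hHs₀top : H.dist s₀ v ≠ ⊤ := ne_top_of_le_ne_top hDtop (le_add_self.trans hkeyB)
  have hC : ∀ s ∈ S, s ≠ s₀ → G.dist q s + H.dist s v = G.dist q v →
      G.dist q s < G.dist q s₀ := by
    intro s hsS hne hsum
    have hqs_top : G.dist q s ≠ ⊤ := ne_top_of_le_ne_top hDtop (hsum ▸ le_self_add)
    have hsv_top : H.dist s v ≠ ⊤ := ne_top_of_le_ne_top hDtop (hsum ▸ le_add_self)
    obtain ⟨W₁, hW₁, hW₁len⟩ := DiGraph.exists_shortest_walk hpos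
      (DiGraph.exists_walk_of_dist_ne_top hqs_top)
    obtain ⟨W₂, hW₂, hW₂len⟩ := DiGraph.exists_shortest_walk hposH
      (DiGraph.exists_walk_of_dist_ne_top hsv_top)
    obtain ⟨u, rfl⟩ := DiGraph.isWalk_concat_form hW₁
    obtain ⟨t, rfl⟩ := DiGraph.isWalk_cons_form hW₂
    have hWw : G.IsWalk q v (u ++ s :: t) :=
      DiGraph.isWalk_append hW₁ (DiGraph.isWalk_mono hsub hW₂)
    have hWlen : ENNReal.ofReal (G.walkLen (u ++ s :: t)) = G.dist q v := by
      rw [DiGraph.walkLen_append G s t u,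
        ENNReal.ofReal_add (DiGraph.walkLen_nonneg hpos hW₁)
          (DiGraph.walkLen_nonneg hpos (DiGraph.isWalk_mono hsub hW₂)),
        hW₁len, ← DiGraph.walkLen_congr hlen, hW₂len, hsum]
    have hPP : u ++ s :: t = P := hPuniq _ hWw hWlen
    have hsufP : s₀ :: p₂ <:+ u ++ s :: t := by
      rw [hPP, hPdec]
      exact ⟨p₁, rfl⟩
    have hsufst : s :: t <:+ u ++ s :: t := ⟨u, rfl⟩
    have hlen_lt : (s₀ :: p₂).length < (s :: t).length := by
      by_contra hcon
      push_neg at hcon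
      have h' : s :: t <:+ s₀ :: p₂ := suffix_of_suffix_length_le hsufst hsufP hcon
      obtain ⟨w, hw⟩ := h'
      cases w with
      | nil =>
        simp only [List.nil_append] at hw
        injection hw with h1 h2
        exact hne h1
      | cons c w =>
        have hmem : s ∈ p₂ := by
          have hst : s :: t <:+ p₂ := by
            simp only [List.cons_append] at hw
            injection hw with _ hw2
            exact ⟨w, hw2⟩
          exact hst.sublist.subset List.mem_cons_self
        exact hp₂ s hmem (Finset.mem_coe.mpr hsS)
    have hsuft : s₀ :: p₂ <:+ t := by
      have h' : s₀ :: p₂ <:+ s :: t :=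
        suffix_of_suffix_length_le hsufP hsufst (le_of_lt hlen_lt)
      obtain ⟨w, hw⟩ := h'
      cases w with
      | nil =>
        have hlen2 := congrArg List.length hw
        simp only [List.nil_append, List.length_cons] at hlen2 hlen_lt
        omega
      | cons c w =>
        simp only [List.cons_append] at hw
        injection hw with _ hw2
        exact ⟨w, hw2⟩
    obtain ⟨m, rfl⟩ := hsuft
    have hW₂' : H.IsWalk s v ((s :: m) ++ s₀ :: p₂) := hW₂
    obtain ⟨hHpre, hHsuf⟩ := DiGraph.isWalk_split hW₂'
    have hposlen : 0 < H.walkLen ((s :: m) ++ [s₀]) :=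
      DiGraph.walkLen_pos hposH hHpre hne
    have hlenW₂ : H.walkLen ((s :: m) ++ s₀ :: p₂) =
        H.walkLen ((s :: m) ++ [s₀]) + H.walkLen (s₀ :: p₂) :=
      DiGraph.walkLen_append H s₀ p₂ (s :: m)
    have hnn : 0 ≤ H.walkLen (s₀ :: p₂) := DiGraph.walkLen_nonneg hposH hHsuf
    have hstrict : H.dist s₀ v < H.dist s v := by
      calc H.dist s₀ v ≤ ENNReal.ofReal (H.walkLen (s₀ :: p₂)) := DiGraph.dist_le hHsuf
        _ < ENNReal.ofReal (H.walkLen ((s :: m) ++ s₀ :: p₂)) := by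
            rw [ENNReal.ofReal_lt_ofReal_iff (by linarith)]
            linarith
        _ = H.dist s v := hW₂len
    have hfinal : G.dist q s + H.dist s₀ v < G.dist q s₀ + H.dist s₀ v := by
      calc G.dist q s + H.dist s₀ v < G.dist q s + H.dist s v :=
            ENNReal.add_lt_add_left hqs_top hstrict
        _ = G.dist q v := hsum
        _ = G.dist q s₀ + H.dist s₀ v := hEq₀.symm
    exact (ENNReal.add_lt_add_iff_right hHs₀top).1 hfinal
  have hdOm : ∀ s', DiGraph.dOm H ω s' v
      = (((G.dist q s' + H.dist s' v : ℝ≥0∞)) : EReal) := by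
    intro s'
    rw [DiGraph.dOm, hω]
    exact (EReal.coe_ennreal_add _ _).symm
  have hVor : ∀ s ∈ S, (∃ l₁ l₂, P = l₁ ++ s :: l₂ ∧ ∀ x ∈ l₂, x ∉ (S : Set V)) ↔ s = s₀ := by
    intro s hsS
    constructor
    · rintro ⟨l₁, l₂, hdec, hno⟩
      exact (last_unique (hdec.symm.trans hPdec) hsS hs₀S hno hp₂).1
    · rintro rfl
      exact ⟨p₁, p₂, hPdec, hp₂⟩
  have hVmem : v ∈ DiGraph.Vor H HV S ω s₀ := by
    refine ⟨hv, ?_⟩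
    intro s' hs' hne
    rcases eq_or_lt_of_le (hkeyA s') with heq | hlt
    · right
      constructor
      · rw [hdOm, hdOm, hEq₀]
        exact_mod_cast heq
      · have hc := hC s' hs' hne heq.symm
        rw [hω, hω]
        exact_mod_cast hc
    · left
      rw [hdOm, hdOm, hEq₀]
      exact_mod_cast hlt
  intro s hsS
  have hiff : v ∈ DiGraph.Vor H HV S ω s ↔
      ∃ l₁ l₂, P = l₁ ++ s :: l₂ ∧ ∀ x ∈ l₂, x ∉ (S : Set V) := by
    constructor
    · intro hvor
      rw [hVor s hsS]
      by_contra hne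
      rcases hvor.2 s₀ hs₀S (fun h => hne h.symm) with hlt | ⟨heq, hlt'⟩
      · have h1 : DiGraph.dOm H ω s₀ v ≤ DiGraph.dOm H ω s v := by
          rw [hdOm, hdOm, hEq₀]
          exact_mod_cast hkeyA s
        exact absurd hlt (not_lt.2 h1)
      · have hsum : G.dist q s + H.dist s v = G.dist q v := by
          rw [hdOm, hdOm, hEq₀] at heq
          exact_mod_cast heq
        have h1 := hC s hsS hne hsum
        have h2 : G.dist q s₀ < G.dist q s := by
          rw [hω, hω] at hlt'
          exact_mod_cast hlt'
        exact absurd h1 (not_lt.2 (le_of_lt h2))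
    · intro hdec
      rw [hVor s hsS] at hdec
      subst hdec
      exact hVmem
  refine ⟨hiff, fun hvor => ?_⟩
  have hs : s = s₀ := (hVor s hsS).1 (hiff.1 hvor)
  subst hs
  rw [hdOm, hEq₀]
end

section
/- Voronoi cells are closed under shortest paths from their site: if v ∈ Vor(s), dist_H(s,v) < ∞, and u is a vertex of H lying on a shortest s-to-v walk in H (i.e., dist_H(s,u) + dist_H(u,v) = dist_H(s,v)), then u ∈ Vor(s). -/
open scoped ENNReal

namespace DiGraph

variable {V : Type}

lemma IsWalk.head {G : DiGraph V} {a b : V} {l : List V} (h : G.IsWalk a b l) :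
    ∃ t, l = a :: t := by cases h <;> exact ⟨_, rfl⟩

lemma isWalk_glue {G : DiGraph V} {a b c : V} {l1 l2 : List V}
    (h1 : G.IsWalk a b l1) (h2 : G.IsWalk b c l2) :
    G.IsWalk a c (l1.dropLast ++ l2) ∧
      G.walkLen (l1.dropLast ++ l2) = G.walkLen l1 + G.walkLen l2 := by
  induction h1 with
  | single a => simpa [walkLen] using h2
  | @cons a b' b l h hw ih =>
      obtain ⟨t, rfl⟩ := hw.head
      obtain ⟨r, hr⟩ : ∃ r, (b' :: t).dropLast ++ l2 = b' :: r := by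
        cases t with
        | nil =>
            cases hw with
            | single => obtain ⟨r, hr⟩ := h2.head; exact ⟨r, by simpa using hr⟩
            | cons h' hw' => cases hw'
        | cons t0 ts => exact ⟨(t0 :: ts).dropLast ++ l2, by simp⟩
      have ih' := ih h2
      constructor
      · have h3 : (a :: b' :: t).dropLast ++ l2 = a :: ((b' :: t).dropLast ++ l2) := by simp
        rw [h3]
        exact IsWalk.cons h ih'.1
      · have h3 : (a :: b' :: t).dropLast ++ l2 = a :: ((b' :: t).dropLast ++ l2) := by simp
        have h4 := ih'.2
        rw [hr] at h4
        rw [h3, hr]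
        simp only [walkLen] at h4 ⊢
        linarith

lemma dist_triangle_s3 (G : DiGraph V) (a b c : V) :
    G.dist a c ≤ G.dist a b + G.dist b c := by
  have key : ∀ x ∈ {x : ℝ≥0∞ | ∃ l, G.IsWalk a b l ∧ x = ENNReal.ofReal (G.walkLen l)},
      ∀ y ∈ {x : ℝ≥0∞ | ∃ l, G.IsWalk b c l ∧ x = ENNReal.ofReal (G.walkLen l)},
      G.dist a c ≤ x + y := by
    rintro x ⟨l1, hw1, rfl⟩ y ⟨l2, hw2, rfl⟩
    obtain ⟨hw, hlen⟩ := isWalk_glue hw1 hw2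
    calc G.dist a c ≤ ENNReal.ofReal (G.walkLen (l1.dropLast ++ l2)) :=
          sInf_le ⟨_, hw, rfl⟩
      _ = ENNReal.ofReal (G.walkLen l1 + G.walkLen l2) := by rw [hlen]
      _ ≤ _ := ENNReal.ofReal_add_le
  rw [dist, dist, ENNReal.sInf_add]
  refine le_iInf₂ fun x hx => ?_
  rw [add_comm, dist, ENNReal.sInf_add]
  refine le_iInf₂ fun y hy => ?_
  rw [add_comm]
  exact key x hx y hy


lemma dOm_coe (H : DiGraph V) (ω : V → ℝ) (s v : V) (h : H.dist s v ≠ ⊤) :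
    dOm H (fun x => ((ω x : ℝ) : EReal)) s v
      = ((ω s + (H.dist s v).toReal : ℝ) : EReal) := by
  rw [dOm]
  conv_lhs => rw [← ENNReal.ofReal_toReal h]
  rw [EReal.coe_ennreal_ofReal, max_eq_left ENNReal.toReal_nonneg, ← EReal.coe_add]

end DiGraph

/-- Voronoi cells are closed under shortest paths from their site: if
`v ∈ Vor(s)`, `dist_H(s,v) < ∞`, and `u` is a vertex of `H` lying on a shortest
`s`-to-`v` walk in `H` (i.e. `dist_H(s,u) + dist_H(u,v) = dist_H(s,v)`), then
`u ∈ Vor(s)`. -/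
theorem stmt3 {V : Type} [Fintype V] (G H : DiGraph V) (HV : Set V) (S : Finset V)
    (hpos : ∀ a b, G.Adj a b → 0 < G.len a b)
    (hsub : ∀ a b, H.Adj a b → G.Adj a b) (hlen : H.len = G.len)
    (hHVedge : ∀ a b, H.Adj a b → a ∈ HV ∧ b ∈ HV)
    (hS : S.Nonempty) (hSH : ↑S ⊆ HV)
    (ω : V → ℝ) (s : V) (hs : s ∈ S)
    (v : V) (hv : v ∈ DiGraph.Vor H HV S (fun x => ((ω x : ℝ) : EReal)) s)
    (hfin : H.dist s v < ⊤)
    (u : V) (hu : u ∈ HV) (hshort : H.dist s u + H.dist u v = H.dist s v) :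
    u ∈ DiGraph.Vor H HV S (fun x => ((ω x : ℝ) : EReal)) s := by
  obtain ⟨hvHV, hvcmp⟩ := hv
  have hd1 : H.dist s u ≠ ⊤ := by
    intro h
    rw [h, top_add] at hshort
    rw [← hshort] at hfin
    exact lt_irrefl _ hfin
  have hd2 : H.dist u v ≠ ⊤ := by
    intro h
    rw [h, add_top] at hshort
    rw [← hshort] at hfin
    exact lt_irrefl _ hfin
  refine ⟨hu, fun s' hs' hne => ?_⟩
  have hv2 := hvcmp s' hs' hne
  have tri := DiGraph.dist_triangle_s3 H s' u v
  by_cases htop : H.dist s' u = ⊤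
  · left
    have h1 : DiGraph.dOm H (fun x => ((ω x : ℝ) : EReal)) s' u = ⊤ := by
      rw [DiGraph.dOm, htop, EReal.coe_ennreal_top, EReal.coe_add_top]
    rw [h1, DiGraph.dOm_coe H ω s u hd1]
    exact EReal.coe_lt_top _
  · have hfv : H.dist s' v ≠ ⊤ := by
      intro h
      rw [h] at tri
      exact (ENNReal.add_lt_top.2 ⟨lt_top_iff_ne_top.2 htop, lt_top_iff_ne_top.2 hd2⟩).ne
        (top_le_iff.1 tri)
    rw [DiGraph.dOm_coe H ω s v hfin.ne, DiGraph.dOm_coe H ω s' v hfv] at hv2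
    rw [DiGraph.dOm_coe H ω s u hd1, DiGraph.dOm_coe H ω s' u htop]
    have hsum : (H.dist s u).toReal + (H.dist u v).toReal = (H.dist s v).toReal := by
      rw [← ENNReal.toReal_add hd1 hd2, hshort]
    have htri : (H.dist s' v).toReal ≤ (H.dist s' u).toReal + (H.dist u v).toReal := by
      rw [← ENNReal.toReal_add htop hd2]
      exact ENNReal.toReal_mono (by simp [ENNReal.add_eq_top, htop, hd2]) tri
    rcases hv2 with h | ⟨h, h'⟩
    · left
      rw [EReal.coe_lt_coe_iff] at h ⊢
      linarith
    · rw [EReal.coe_eq_coe_iff] at h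
      rw [EReal.coe_lt_coe_iff] at h'
      rcases lt_or_eq_of_le (by linarith :
          ω s + (H.dist s u).toReal ≤ ω s' + (H.dist s' u).toReal) with hlt | heq
      · left; exact EReal.coe_lt_coe_iff.2 hlt
      · right; exact ⟨by rw [heq], EReal.coe_lt_coe_iff.2 h'⟩
end
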